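/- If q ⊑_de-simulates p in a Büchi automaton A and A' is obtained from A by adding the transition r →^a p where r →^a q already exists, then the delayed simulation relation of A is included in the delayed simulation relation of A'. -/

import Mathlib

open scoped Classical

universe u v

/-- A (nondeterministic) Büchi automaton. -/
structure BA (A : Type u) (Q : Type v) where
  δ : Q → A → Set Q
  I : Set Q
  F : Set Q

namespace BA

variable {A : Type u} {Q : Type v}

/-- Completeness: every state has a successor on every symbol. -/
def Complete (M : BA A Q) : Prop := ∀ q a, (M.δ q a).Nonempty

/-- `ρ` is a run of `M` over the infinite word `α` (from `ρ 0`). -/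
def IsRun (M : BA A Q) (α : ℕ → A) (ρ : ℕ → Q) : Prop :=
  ∀ i, ρ (i + 1) ∈ M.δ (ρ i) (α i)

/-- `M` accepts `α` from state `q` (some run from `q` visits `F` infinitely often). -/
def AcceptsFrom (M : BA A Q) (q : Q) (α : ℕ → A) : Prop :=
  ∃ ρ, ρ 0 = q ∧ M.IsRun α ρ ∧ ∀ n, ∃ m ≥ n, ρ m ∈ M.F

def LangFrom (M : BA A Q) (q : Q) : Set (ℕ → A) := {α | M.AcceptsFrom q α}

def Lang (M : BA A Q) : Set (ℕ → A) := {α | ∃ q ∈ M.I, M.AcceptsFrom q α}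

/-! ### Simulation games -/

/-- A (positional, total) Duplicator strategy: given Duplicator's current state and
Spoiler's transition `p →a p'`, pick Duplicator's next state, which must be an
`a`-successor of Duplicator's current state. -/
def IsStrategy (M : BA A Q) (σ : Q → Q → A → Q → Q) : Prop :=
  ∀ r p a p', σ r p a p' ∈ M.δ r a

/-- The trace produced by Duplicator following strategy `σ` from `r` against
Spoiler's trace `ρ` over the word `α`. -/
def play (σ : Q → Q → A → Q → Q) (r : Q) (α : ℕ → A) (ρ : ℕ → Q) : ℕ → Q
  | 0 => r
  | i + 1 => σ (play σ r α ρ i) (ρ i) (α i) (ρ (i + 1))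

/-- Direct-simulation winning condition. -/
def CondDi (M : BA A Q) (ρ τ : ℕ → Q) : Prop := ∀ i, ρ i ∈ M.F → τ i ∈ M.F

/-- Delayed-simulation winning condition. -/
def CondDe (M : BA A Q) (ρ τ : ℕ → Q) : Prop := ∀ i, ρ i ∈ M.F → ∃ k ≥ i, τ k ∈ M.F

/-- Fair-simulation winning condition. -/
def CondF (M : BA A Q) (ρ τ : ℕ → Q) : Prop :=
  (∀ n, ∃ m ≥ n, ρ m ∈ M.F) → (∀ n, ∃ m ≥ n, τ m ∈ M.F)

/-- `σ` is winning for Duplicator from configuration `(p, q)` wrt condition `C`. -/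
def WinsFrom (M : BA A Q) (C : (ℕ → Q) → (ℕ → Q) → Prop)
    (σ : Q → Q → A → Q → Q) (p q : Q) : Prop :=
  ∀ α ρ, ρ 0 = p → M.IsRun α ρ → C ρ (play σ q α ρ)

/-- The (maximal) simulation relation given by winning condition `C`. -/
def Sim (M : BA A Q) (C : (ℕ → Q) → (ℕ → Q) → Prop) (p q : Q) : Prop :=
  ∃ σ, M.IsStrategy σ ∧ M.WinsFrom C σ p q

def DiSim (M : BA A Q) : Q → Q → Prop := M.Sim M.CondDi
def DeSim (M : BA A Q) : Q → Q → Prop := M.Sim M.CondDe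
def FairSim (M : BA A Q) : Q → Q → Prop := M.Sim M.CondF

/-! ### Run DAGs and ranks -/

/-- Vertices of the run DAG of `M` over `α`. -/
def DagV (M : BA A Q) (α : ℕ → A) : Set (Q × ℕ) :=
  {v | ∃ ρ, ρ 0 ∈ M.I ∧ M.IsRun α ρ ∧ ρ v.2 = v.1}

/-- The edge relation of the run DAG. -/
def dagStep (M : BA A Q) (α : ℕ → A) (u v : Q × ℕ) : Prop :=
  v.2 = u.2 + 1 ∧ v.1 ∈ M.δ u.1 (α u.2)

/-- Reachability inside a sub-DAG `G`. -/
def reachIn (M : BA A Q) (α : ℕ → A) (G : Set (Q × ℕ)) : Q × ℕ → Q × ℕ → Prop :=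
  Relation.ReflTransGen (fun u v => u ∈ G ∧ v ∈ G ∧ M.dagStep α u v)

/-- A vertex of `G` is finite if it reaches only finitely many vertices inside `G`. -/
def FiniteIn (M : BA A Q) (α : ℕ → A) (G : Set (Q × ℕ)) (v : Q × ℕ) : Prop :=
  v ∈ G ∧ {u | M.reachIn α G v u}.Finite

/-- A vertex of `G` is endangered if it reaches no accepting vertex inside `G`. -/
def EndangeredIn (M : BA A Q) (α : ℕ → A) (G : Set (Q × ℕ)) (v : Q × ℕ) : Prop :=
  v ∈ G ∧ ∀ u, M.reachIn α G v u → u.1 ∉ M.F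

/-- The decreasing sequence of DAGs of the ranking procedure: at even steps remove
the finite vertices, at odd steps remove the endangered vertices. -/
def dagSeq (M : BA A Q) (α : ℕ → A) : ℕ → Set (Q × ℕ)
  | 0 => M.DagV α
  | j + 1 =>
      if Even j then M.dagSeq α j \ {v | M.FiniteIn α (M.dagSeq α j) v}
      else M.dagSeq α j \ {v | M.EndangeredIn α (M.dagSeq α j) v}

/-- The rank of a vertex: the step `j ≤ 2n` at which it is removed in the ranking
procedure, and `ω` (i.e. `⊤`) if it is never removed within `2n + 1` steps. -/
noncomputable def rank (M : BA A Q) (α : ℕ → A) (n : ℕ) (v : Q × ℕ) : ℕ∞ :=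
  if ∃ j ≤ 2 * n, v ∈ M.dagSeq α j ∧ v ∉ M.dagSeq α (j + 1) then
    ((sInf {j | v ∈ M.dagSeq α j ∧ v ∉ M.dagSeq α (j + 1)} : ℕ) : ℕ∞)
  else ⊤

end BA

/-! ### Schewe's rank-based complementation -/

/-- A macrostate `(S, O, f, i)` of the rank-based construction. -/
structure Macro (Q : Type v) where
  S : Set Q
  O : Set Q
  f : Q → ℕ
  i : ℕ

/-- The rank of a level ranking `f`: its maximal value. -/
def rankOf {Q : Type v} [Fintype Q] (f : Q → ℕ) : ℕ := Finset.univ.sup f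

/-- The smallest even number `≥ k`. -/
def rondNat (k : ℕ) : ℕ := if Even k then k else k + 1

/-- The smallest even number `≥ x`, with `⌈ω⌉ = ω`. -/
def rondE (x : ℕ∞) : ℕ∞ := WithTop.map rondNat x

namespace BA

variable {A : Type u} {Q : Type v}

/-- A level ranking: ranks bounded by `2n`, accepting states get even ranks. -/
def LevelRanking (M : BA A Q) (n : ℕ) (f : Q → ℕ) : Prop :=
  (∀ q, f q ≤ 2 * n) ∧ ∀ q ∈ M.F, Even (f q)

/-- `f` is `S`-tight. -/
def STight [Fintype Q] (M : BA A Q) (n : ℕ) (S : Set Q) (f : Q → ℕ) : Prop :=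
  M.LevelRanking n f ∧ Odd (rankOf f) ∧
  (∀ m, Odd m → m ≤ rankOf f → ∃ s ∈ S, f s = m) ∧
  ∀ q ∉ S, f q = 0

/-- Successors of a set of states. -/
def δSet (M : BA A Q) (S : Set Q) (a : A) : Set Q := ⋃ q ∈ S, M.δ q a

/-- Validity of a macrostate, i.e., membership in `Q₂`. -/
def Q2Valid [Fintype Q] (M : BA A Q) (n : ℕ) (m : Macro Q) : Prop :=
  M.STight n m.S m.f ∧ m.O ⊆ m.S ∩ {q | m.f q = m.i} ∧ Even m.i ∧ m.i + 2 ≤ 2 * n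

/-- The `δ₃` successor condition of the rank-based construction, where `cl` is the
closure operator applied to the successor set (use `cl = id` for the plain
construction). -/
def macroSucc [Fintype Q] (M : BA A Q) (cl : Set Q → Set Q) (m m' : Macro Q)
    (a : A) : Prop :=
  m'.S = cl (M.δSet m.S a) ∧
  (∀ q ∈ m.S, ∀ q' ∈ M.δ q a, m'.f q' ≤ m.f q) ∧
  rankOf m'.f = rankOf m.f ∧
  ((m.O = ∅ ∧ m'.i = (m.i + 2) % (rankOf m'.f + 1) ∧ m'.O = {q | m'.f q = m'.i}) ∨
   (m.O ≠ ∅ ∧ m'.i = m.i ∧ m'.O = M.δSet m.O a ∩ {q | m'.f q = m'.i}))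

/-- Schewe's rank-based complement construction, parameterized by a predicate
`keep` selecting which macrostates of `Q₂` are kept (use `fun _ => True` for the
plain construction) and a closure `cl` applied to successor sets (use `id` for
the plain construction). -/
def schewe [Fintype Q] (M : BA A Q) (n : ℕ) (keep : Macro Q → Prop)
    (cl : Set Q → Set Q) : BA A (Set Q ⊕ Macro Q) where
  δ := fun s a =>
    match s with
    | Sum.inl S =>
        {Sum.inl (cl (M.δSet S a))} ∪
        {s' | ∃ m : Macro Q, s' = Sum.inr m ∧ m.S = cl (M.δSet S a) ∧ m.O = ∅ ∧
              m.i = 0 ∧ M.Q2Valid n m ∧ keep m}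
    | Sum.inr m =>
        {s' | ∃ m' : Macro Q, s' = Sum.inr m' ∧ M.macroSucc cl m m' a ∧
              M.Q2Valid n m' ∧ keep m'}
  I := {Sum.inl M.I}
  F := {Sum.inl (∅ : Set Q)} ∪
       {s | ∃ m : Macro Q, s = Sum.inr m ∧ m.O = ∅ ∧ M.Q2Valid n m ∧ keep m}

/-! ### Finite paths, quotients, added transitions -/

/-- Finite path from `p` to `q` over the finite word `w`. -/
inductive Path (M : BA A Q) : Q → List A → Q → Prop
  | nil (q : Q) : Path M q [] q
  | cons {p q r : Q} {a : A} {w : List A} :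
      q ∈ M.δ p a → Path M q w r → Path M p (a :: w) r

/-- Finite path from `p` to `q` over `w` that visits an accepting state. -/
inductive APath (M : BA A Q) : Q → List A → Q → Prop
  | here {p : Q} {w : List A} {q : Q} : p ∈ M.F → Path M p w q → APath M p w q
  | step {p q r : Q} {a : A} {w : List A} :
      q ∈ M.δ p a → APath M q w r → APath M p (a :: w) r

/-- The factor of the infinite word `α` between positions `i` (included) and
`j` (excluded). -/
def wordSeg (α : ℕ → A) (i j : ℕ) : List A := (List.range (j - i)).map fun m => α (i + m)

/-- `α` belongs to the ω-power `L^ω` of the language `L` of finite words. -/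
def InOmegaPow (L : Language A) (α : ℕ → A) : Prop :=
  ∃ t : ℕ → ℕ, t 0 = 0 ∧ StrictMono t ∧ ∀ k, wordSeg α (t k) (t (k + 1)) ∈ L

/-- The automaton `M` with the extra transition `r →a p` added. -/
def addTr (M : BA A Q) (r : Q) (a : A) (p : Q) : BA A Q where
  δ := fun s b => M.δ s b ∪ {x | s = r ∧ b = a ∧ x = p}
  I := M.I
  F := M.F

/-- The quotient automaton of `M` by the equivalence (setoid) `s`. -/
def quotBA (M : BA A Q) (s : Setoid Q) : BA A (Quotient s) where
  δ := fun c a => {c' | ∃ u u', Quotient.mk s u = c ∧ Quotient.mk s u' = c' ∧ u' ∈ M.δ u a}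
  I := {c | ∃ u ∈ M.I, Quotient.mk s u = c}
  F := {c | ∃ u ∈ M.F, Quotient.mk s u = c}

end BA

noncomputable section Stmt9Aux
namespace BA
variable {A : Type u} {Q : Type v}

lemma winsFrom_step (M : BA A Q) {σ : Q → Q → A → Q → Q}
    {x u w : Q} {c : A} (hw : w ∈ M.δ x c) (hwin : M.WinsFrom M.CondDe σ x u) :
    M.WinsFrom M.CondDe σ w (σ u x c w) := by
  intro α' ρ' h0 hrun
  classical
  set α : ℕ → A := fun i => Nat.rec c (fun i _ => α' i) i with hα
  set ρ : ℕ → Q := fun i => Nat.rec x (fun i _ => ρ' i) i with hρ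
  have hρ0 : ρ 0 = x := rfl
  have hρs : ∀ i, ρ (i + 1) = ρ' i := fun i => rfl
  have hαs : ∀ i, α (i + 1) = α' i := fun i => rfl
  have hrun2 : M.IsRun α ρ := by
    intro i
    cases i with
    | zero => show ρ' 0 ∈ M.δ x c; rw [h0]; exact hw
    | succ i => exact hrun i
  have hp : ∀ i, play σ u α ρ (i + 1) = play σ (σ u x c w) α' ρ' i := by
    intro i
    induction i with
    | zero =>
        show σ u x c (ρ' 0) = σ u x c w
        rw [h0]
    | succ i ih =>
        show σ (play σ u α ρ (i+1)) (ρ' i) (α' i) (ρ' (i+1)) =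
          σ (play σ (σ u x c w) α' ρ' i) (ρ' i) (α' i) (ρ' (i+1))
        rw [ih]
  intro i hF
  have hF2 : ρ (i + 1) ∈ M.F := by rw [hρs]; exact hF
  obtain ⟨k, hk, hkF⟩ := hwin α ρ hρ0 hrun2 (i + 1) hF2
  obtain ⟨k', rfl⟩ : ∃ k', k = k' + 1 := ⟨k - 1, by omega⟩
  exact ⟨k', by omega, by rw [← hp k']; exact hkF⟩

lemma deSim_step (M : BA A Q) {x u w : Q} {c : A} (h : M.DeSim x u) (hw : w ∈ M.δ x c) :
    ∃ u', u' ∈ M.δ u c ∧ M.DeSim w u' := by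
  obtain ⟨σ, hσ, hwin⟩ := h
  exact ⟨σ u x c w, hσ u x c w, σ, hσ, winsFrom_step M hw hwin⟩

/-- chains of `DeSim` links of a given length -/
def chainN (M : BA A Q) : ℕ → Q → Q → Prop
  | 0, x, u => x = u
  | n + 1, x, u => ∃ y, M.DeSim x y ∧ chainN M n y u

lemma chainN_push (M : BA A Q) : ∀ (n : ℕ) {x u : Q}, chainN M n x u →
    ∀ {c : A} {w : Q}, w ∈ M.δ x c → ∃ u', u' ∈ M.δ u c ∧ chainN M n w u' := by
  intro n
  induction n with
  | zero => intro x u h c w hw; cases h; exact ⟨w, hw, rfl⟩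
  | succ n ih =>
      intro x u h c w hw
      obtain ⟨y, hxy, rest⟩ := h
      obtain ⟨y', hy', hsim'⟩ := deSim_step M hxy hw
      obtain ⟨u', hu', chain'⟩ := ih rest hy'
      exact ⟨u', hu', y', hsim', chain'⟩

lemma chainN_concat (M : BA A Q) : ∀ (m : ℕ) {n : ℕ} {x y u : Q},
    chainN M m x y → chainN M n y u → chainN M (m + n) x u := by
  intro m
  induction m with
  | zero => intro n x y u h h2; cases h; simpa using h2
  | succ m ih =>
      intro n x y u h h2
      obtain ⟨z, hxz, rest⟩ := h
      have : chainN M (m + n) z u := ih rest h2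
      exact (by rw [Nat.succ_add]; exact ⟨z, hxz, this⟩)

lemma chainN_cons (M : BA A Q) {n : ℕ} {x y u : Q}
    (h1 : M.DeSim x y) (h2 : chainN M n y u) : chainN M (n + 1) x u := by
  simp only [chainN]; exact ⟨y, h1, h2⟩

lemma chainN_snoc (M : BA A Q) {n : ℕ} {x y z : Q}
    (h : chainN M n x y) (h2 : M.DeSim y z) : chainN M (n + 1) x z :=
  chainN_concat M n h ⟨z, h2, rfl⟩

/-- Ordinal-graded "pending" relation: Duplicator can force reaching `F`
while maintaining `DeSim`, with the ordinal as a progress measure. -/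
def P0R (M : BA A Q) (β : Ordinal.{max u v}) (y z : Q) : Prop :=
  M.DeSim y z ∧ (z ∈ M.F ∨ ∀ c y', y' ∈ M.δ y c →
    ∃ z', z' ∈ M.δ z c ∧ M.DeSim y' z' ∧
      ∃ γ : {o : Ordinal.{max u v} // o < β}, P0R M γ.1 y' z')
termination_by β
decreasing_by exact γ.2

lemma p0r_of_F_mem (M : BA A Q) {y z : Q} (h : M.DeSim y z) (hz : z ∈ M.F) :
    ∃ β, P0R M β y z := ⟨0, by rw [P0R]; exact ⟨h, Or.inl hz⟩⟩

lemma p0r_closure (M : BA A Q) {y z : Q} (h1 : M.DeSim y z)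
    (h2 : ∀ c y', y' ∈ M.δ y c → ∃ z', z' ∈ M.δ z c ∧ M.DeSim y' z' ∧
      ∃ β : Ordinal.{max u v}, P0R M β y' z') :
    ∃ β : Ordinal.{max u v}, P0R M β y z := by
  classical
  choose f hf1 hf2 hf3 using h2
  choose g hg using hf3
  set fam : (Σ' (c : A) (y' : Q), y' ∈ M.δ y c) → Ordinal.{max u v} :=
    fun i => g i.1 i.2.1 i.2.2 with hfam
  refine ⟨Ordinal.lsub.{max u v, max u v} fam, ?_⟩
  rw [P0R]
  refine ⟨h1, Or.inr fun c y' h =>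
    ⟨f c y' h, hf1 c y' h, hf2 c y' h,
      ⟨⟨g c y' h, ?_⟩, hg c y' h⟩⟩⟩
  exact Ordinal.lt_lsub fam ⟨c, y', h⟩

/-- The key "obligation creation" fact: if `y ⊑de z` and `y` is accepting, then
Duplicator can force visiting `F` from `(y, z)`. -/
lemma p0r_of_F (M : BA A Q) {y z : Q} (hde : M.DeSim y z) (hyF : y ∈ M.F) :
    ∃ β : Ordinal.{max u v}, P0R M β y z := by
  classical
  by_contra hno
  obtain ⟨σ, hσ, hwin⟩ := hde
  set Inv : Q × Q → Prop :=
    (fun pr => M.WinsFrom M.CondDe σ pr.1 pr.2 ∧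
      ¬∃ β : Ordinal.{max u v}, P0R M β pr.1 pr.2) with hInv
  have hnF : ∀ pr, Inv pr → pr.2 ∉ M.F := by
    intro pr hpr hf
    exact hpr.2 (p0r_of_F_mem M ⟨σ, hσ, hpr.1⟩ hf)
  have hstep : ∀ pr, Inv pr →
      ∃ c y', y' ∈ M.δ pr.1 c ∧ Inv (y', σ pr.2 pr.1 c y') := by
    intro pr hpr
    by_contra hcon
    push_neg at hcon
    apply hpr.2
    apply p0r_closure M ⟨σ, hσ, hpr.1⟩
    intro c y' h
    have hw' : M.WinsFrom M.CondDe σ y' (σ pr.2 pr.1 c y') :=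
      winsFrom_step M h hpr.1
    refine ⟨σ pr.2 pr.1 c y', hσ pr.2 pr.1 c y', ⟨σ, hσ, hw'⟩, ?_⟩
    by_contra hne
    exact hcon c y' h ⟨hw', hne⟩
  choose cf yf hmem hinv using hstep
  let seq : ℕ → {pr : Q × Q // Inv pr} := fun n =>
    Nat.rec ⟨(y, z), ⟨hwin, hno⟩⟩
      (fun _ s => ⟨(yf s.1 s.2, σ s.1.2 s.1.1 (cf s.1 s.2) (yf s.1 s.2)),
        hinv s.1 s.2⟩) n
  let ρ : ℕ → Q := fun i => (seq i).1.1
  let α : ℕ → A := fun i => cf (seq i).1 (seq i).2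
  have hrun : M.IsRun α ρ := by
    intro i
    exact hmem (seq i).1 (seq i).2
  have hplay : ∀ i, play σ z α ρ i = (seq i).1.2 := by
    intro i
    induction i with
    | zero => rfl
    | succ i ih =>
        show σ (play σ z α ρ i) (ρ i) (α i) (ρ (i+1)) = (seq (i+1)).1.2
        rw [ih]
  obtain ⟨k, _, hkF⟩ := hwin α ρ rfl hrun 0 hyF
  rw [hplay k] at hkF
  exact hnF (seq k).1 (seq k).2 hkF

/-- chains of positive length -/
def Vrel (M : BA A Q) (x u : Q) : Prop := ∃ n, chainN M (n + 1) x u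

/-- chains with a "pending" marker link somewhere -/
def PCrel (M : BA A Q) (x u : Q) : Prop :=
  ∃ (n d : ℕ) (β : Ordinal.{max u v}) (y z : Q),
    chainN M n x y ∧ P0R M β y z ∧ chainN M d z u

def MeasSet (M : BA A Q) (x u : Q) : Set (ℕ ×ₗ Ordinal.{max u v}) :=
  {m | ∃ (n : ℕ) (y z : Q),
    chainN M n x y ∧ P0R M (ofLex m).2 y z ∧ chainN M (ofLex m).1 z u}

lemma measSet_nonempty (M : BA A Q) {x u : Q} (h : PCrel M x u) :
    (MeasSet M x u).Nonempty := by
  obtain ⟨n, d, β, y, z, h1, h2, h3⟩ := h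
  exact ⟨toLex (d, β), n, y, z, h1, h2, h3⟩

noncomputable def rk (M : BA A Q) (x u : Q) : ℕ ×ₗ Ordinal.{max u v} :=
  if h : (MeasSet M x u).Nonempty then
    (wellFounded_lt : WellFounded ((· < ·) : (ℕ ×ₗ Ordinal.{max u v}) → _ → Prop)).min
      (MeasSet M x u) h
  else toLex (0, 0)

lemma rk_mem (M : BA A Q) {x u : Q} (h : PCrel M x u) : rk M x u ∈ MeasSet M x u := by
  rw [rk, dif_pos (measSet_nonempty M h)]
  exact WellFounded.min_mem _ _ _

lemma rk_le (M : BA A Q) {x u : Q} {m : ℕ ×ₗ Ordinal.{max u v}}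
    (hm : m ∈ MeasSet M x u) : rk M x u ≤ m := by
  have hne : (MeasSet M x u).Nonempty := ⟨m, hm⟩
  rw [rk, dif_pos hne]
  exact not_lt.1 (WellFounded.not_lt_min _ _ hm)

lemma fV (M : BA A Q) {x u : Q} (hV : Vrel M x u) (hxF : x ∈ M.F) :
    u ∈ M.F ∨ PCrel M x u := by
  obtain ⟨n, y, hxy, rest⟩ := hV
  obtain ⟨β, hβ⟩ := p0r_of_F M hxy hxF
  exact Or.inr ⟨0, n, β, x, y, rfl, hβ, rest⟩

lemma V_step (M : BA A Q) {p q r : Q} {a : A} (hq : q ∈ M.δ r a) (hsim : M.DeSim p q)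
    {x u x' : Q} {c : A} (hV : Vrel M x u) (hx' : x' ∈ (M.addTr r a p).δ x c) :
    ∃ u', u' ∈ M.δ u c ∧ Vrel M x' u' := by
  have hx'' : x' ∈ M.δ x c ∨ (x = r ∧ c = a ∧ x' = p) := hx'
  rcases hx'' with hx'M | ⟨rfl, rfl, rfl⟩
  · obtain ⟨n, yy, hxy, rest⟩ := hV
    obtain ⟨y', hy', hs'⟩ := deSim_step M hxy hx'M
    obtain ⟨u', hu', ch'⟩ := chainN_push M n rest hy'
    exact ⟨u', hu', n, y', hs', ch'⟩
  · obtain ⟨n, hc⟩ := hV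
    obtain ⟨u', hu', ch'⟩ := chainN_push M (n + 1) hc hq
    exact ⟨u', hu', n + 1, q, hsim, ch'⟩

lemma pend_step (M : BA A Q) {p q r : Q} {a : A} (hq : q ∈ M.δ r a) (hsim : M.DeSim p q)
    {x u x' : Q} {c : A} (hPC : PCrel M x u) (huF : u ∉ M.F)
    (hx' : x' ∈ (M.addTr r a p).δ x c) :
    ∃ u', u' ∈ M.δ u c ∧ Vrel M x' u' ∧
      (u' ∈ M.F ∨ (PCrel M x' u' ∧ rk M x' u' < rk M x u)) := by
  obtain ⟨n, y, z, hxy, hP, hzu⟩ := rk_mem M hPC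
  rw [P0R] at hP
  obtain ⟨hyz, hor⟩ := hP
  have hstepfn : ∀ c₀ y₀, y₀ ∈ M.δ y c₀ → ∃ z', z' ∈ M.δ z c₀ ∧ M.DeSim y₀ z' ∧
      ∃ γ : {o : Ordinal.{max u v} // o < (ofLex (rk M x u)).2}, P0R M γ.1 y₀ z' := by
    rcases hor with hzF | h
    · exfalso
      rcases hdd : (ofLex (rk M x u)).1 with _ | d'
      · rw [hdd] at hzu
        exact huF (hzu ▸ hzF)
      · rw [hdd] at hzu
        obtain ⟨w, hzw, htop⟩ := hzu
        obtain ⟨β₂, hβ₂⟩ := p0r_of_F M hzw hzF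
        have hmem2 : toLex (d', β₂) ∈ MeasSet M x u :=
          ⟨n + 1, z, w, chainN_snoc M hxy hyz, hβ₂, htop⟩
        have hlt : toLex (d', β₂) < rk M x u := by
          have hrw : rk M x u = toLex ((ofLex (rk M x u)).1, (ofLex (rk M x u)).2) := rfl
          rw [hrw, Prod.Lex.lt_iff]
          exact Or.inl (by rw [hdd]; exact Nat.lt_succ_self d')
        exact absurd (lt_of_le_of_lt (rk_le M hmem2) hlt) (lt_irrefl _)
    · exact h
  have main : ∀ (nb : ℕ) (y' : Q), y' ∈ M.δ y c → chainN M nb x' y' →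
      ∃ u', u' ∈ M.δ u c ∧ Vrel M x' u' ∧
        (u' ∈ M.F ∨ (PCrel M x' u' ∧ rk M x' u' < rk M x u)) := by
    intro nb y' hy'δ hbel
    obtain ⟨z', hz'δ, hyz', γ, hγ⟩ := hstepfn c y' hy'δ
    obtain ⟨u', hu'δ, htop⟩ := chainN_push M _ hzu hz'δ
    refine ⟨u', hu'δ, ⟨nb + (ofLex (rk M x u)).1, ?_⟩, Or.inr ⟨⟨nb, (ofLex (rk M x u)).1, γ.1, y', z', hbel, hγ, htop⟩, ?_⟩⟩
    · exact chainN_concat M nb hbel (chainN_cons M hyz' htop)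
    · have hmem2 : toLex ((ofLex (rk M x u)).1, γ.1) ∈ MeasSet M x' u' :=
        ⟨nb, y', z', hbel, hγ, htop⟩
      have hlt : toLex ((ofLex (rk M x u)).1, γ.1) < rk M x u := by
        have hrw : rk M x u = toLex ((ofLex (rk M x u)).1, (ofLex (rk M x u)).2) := rfl
        conv_rhs => rw [hrw]
        rw [Prod.Lex.lt_iff]
        exact Or.inr ⟨rfl, γ.2⟩
      exact lt_of_le_of_lt (rk_le M hmem2) hlt
  have hx'' : x' ∈ M.δ x c ∨ (x = r ∧ c = a ∧ x' = p) := hx'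
  rcases hx'' with hx'M | ⟨rfl, rfl, rfl⟩
  · obtain ⟨y', hy', hbel⟩ := chainN_push M n hxy hx'M
    exact main n y' hy' hbel
  · obtain ⟨y', hy', hbel0⟩ := chainN_push M n hxy hq
    exact main (n + 1) y' hy' ⟨q, hsim, hbel0⟩

lemma exists_min_rk (M : BA A Q) (x' : Q) {P : Q → Prop} (h : ∃ u', P u') :
    ∃ u', P u' ∧ ∀ u'', P u'' → rk M x' u' ≤ rk M x' u'' := by
  classical
  obtain ⟨u0, hu0⟩ := h
  have hne : (rk M x' '' {w | P w}).Nonempty := ⟨_, ⟨u0, hu0, rfl⟩⟩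
  have hm := WellFounded.min_mem
    (wellFounded_lt : WellFounded ((· < ·) : (ℕ ×ₗ Ordinal.{max u v}) → _ → Prop))
    _ hne
  obtain ⟨u', hu', hrk⟩ := hm
  refine ⟨u', hu', fun u'' h'' => ?_⟩
  rw [hrk]
  exact not_lt.1 (WellFounded.not_lt_min _ (rk M x' '' {w | P w}) ⟨u'', h'', rfl⟩)

noncomputable def strat (M : BA A Q) (hM : M.Complete) (r : Q) (a : A) (p : Q) :
    Q → Q → A → Q → Q := fun u x c x' =>
  if h1 : ∃ u', u' ∈ (M.addTr r a p).δ u c ∧ Vrel M x' u' ∧ u' ∈ M.F then h1.choose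
  else if h2 : ∃ u', (u' ∈ (M.addTr r a p).δ u c ∧ Vrel M x' u' ∧ PCrel M x' u') ∧
      ∀ u'', u'' ∈ (M.addTr r a p).δ u c ∧ Vrel M x' u'' ∧ PCrel M x' u'' →
        rk M x' u' ≤ rk M x' u'' then h2.choose
  else if h3 : ∃ u', u' ∈ (M.addTr r a p).δ u c ∧ Vrel M x' u' then h3.choose
  else (hM u c).choose

lemma strat_mem (M : BA A Q) (hM : M.Complete) (r : Q) (a : A) (p : Q)
    (u x : Q) (c : A) (x' : Q) :
    strat M hM r a p u x c x' ∈ (M.addTr r a p).δ u c := by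
  rw [strat]
  split_ifs with h1 h2 h3
  · exact h1.choose_spec.1
  · exact h2.choose_spec.1.1
  · exact h3.choose_spec.1
  · exact Or.inl (hM u c).choose_spec


lemma strat_V (M : BA A Q) (hM : M.Complete) (r : Q) (a : A) (p : Q)
    {u x : Q} {c : A} {x' : Q}
    (h : ∃ u', u' ∈ (M.addTr r a p).δ u c ∧ Vrel M x' u') :
    Vrel M x' (strat M hM r a p u x c x') := by
  by_cases h1 : ∃ u', u' ∈ (M.addTr r a p).δ u c ∧ Vrel M x' u' ∧ u' ∈ M.F
  · rw [strat, dif_pos h1]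
    exact h1.choose_spec.2.1
  by_cases h2 : ∃ u', (u' ∈ (M.addTr r a p).δ u c ∧ Vrel M x' u' ∧ PCrel M x' u') ∧
      ∀ u'', u'' ∈ (M.addTr r a p).δ u c ∧ Vrel M x' u'' ∧ PCrel M x' u'' →
        rk M x' u' ≤ rk M x' u''
  · rw [strat, dif_neg h1, dif_pos h2]
    exact h2.choose_spec.1.2.1
  rw [strat, dif_neg h1, dif_neg h2, dif_pos h]
  exact h.choose_spec.2

lemma strat_F (M : BA A Q) (hM : M.Complete) (r : Q) (a : A) (p : Q)
    {u x : Q} {c : A} {x' : Q}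
    (h1 : ∃ u', u' ∈ (M.addTr r a p).δ u c ∧ Vrel M x' u' ∧ u' ∈ M.F) :
    strat M hM r a p u x c x' ∈ M.F := by
  rw [strat, dif_pos h1]
  exact h1.choose_spec.2.2

lemma strat_P (M : BA A Q) (hM : M.Complete) (r : Q) (a : A) (p : Q)
    {u x : Q} {c : A} {x' : Q}
    (hn1 : ¬∃ u', u' ∈ (M.addTr r a p).δ u c ∧ Vrel M x' u' ∧ u' ∈ M.F)
    (h : ∃ u', u' ∈ (M.addTr r a p).δ u c ∧ Vrel M x' u' ∧ PCrel M x' u') :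
    PCrel M x' (strat M hM r a p u x c x') ∧
      ∀ u'', u'' ∈ (M.addTr r a p).δ u c ∧ Vrel M x' u'' ∧ PCrel M x' u'' →
        rk M x' (strat M hM r a p u x c x') ≤ rk M x' u'' := by
  have h2 := exists_min_rk M x'
    (P := fun u' => u' ∈ (M.addTr r a p).δ u c ∧ Vrel M x' u' ∧ PCrel M x' u') h
  rw [strat, dif_neg hn1, dif_pos h2]
  exact ⟨h2.choose_spec.1.2.2, fun u'' hu'' => h2.choose_spec.2 u'' hu''⟩

end BA
end Stmt9Aux

theorem stmt9' {A : Type u} {Q : Type v} (M : BA A Q) (hM : M.Complete)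
    (p q r : Q) (a : A) (hq : q ∈ M.δ r a) (hsim : M.DeSim p q) :
    ∀ s t : Q, M.DeSim s t → (M.addTr r a p).DeSim s t := by
  classical
  intro s t hst
  refine ⟨BA.strat M hM r a p, fun u x c x' => BA.strat_mem M hM r a p u x c x', ?_⟩
  intro α ρ h0 hrun
  set σ := BA.strat M hM r a p with hσdef
  have hInv : ∀ i, BA.Vrel M (ρ i) (BA.play σ t α ρ i) := by
    intro i
    induction i with
    | zero =>
        show BA.Vrel M (ρ 0) t
        rw [h0]
        exact ⟨0, BA.chainN_cons M hst rfl⟩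
    | succ i ih =>
        obtain ⟨u', hu', hV'⟩ := BA.V_step M hq hsim ih (hrun i)
        show BA.Vrel M (ρ (i+1))
          (σ (BA.play σ t α ρ i) (ρ i) (α i) (ρ (i+1)))
        exact BA.strat_V M hM r a p ⟨u', Or.inl hu', hV'⟩
  intro i hF
  by_cases hτi : BA.play σ t α ρ i ∈ M.F
  · exact ⟨i, le_refl i, hτi⟩
  have hPC : BA.PCrel M (ρ i) (BA.play σ t α ρ i) :=
    (BA.fV M (hInv i) hF).resolve_left hτi
  have haux : ∀ (m : ℕ ×ₗ Ordinal.{max u v}), ∀ j,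
      BA.PCrel M (ρ j) (BA.play σ t α ρ j) →
      BA.rk M (ρ j) (BA.play σ t α ρ j) = m → ∃ k, k ≥ j ∧ BA.play σ t α ρ k ∈ M.F := by
    intro m
    refine (wellFounded_lt : WellFounded
        ((· < ·) : (ℕ ×ₗ Ordinal.{max u v}) → _ → Prop)).induction
      (C := fun m => ∀ j, BA.PCrel M (ρ j) (BA.play σ t α ρ j) →
        BA.rk M (ρ j) (BA.play σ t α ρ j) = m →
        ∃ k, k ≥ j ∧ BA.play σ t α ρ k ∈ M.F) m ?_
    intro m IH j hPCj hrkj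
    by_cases hτj : BA.play σ t α ρ j ∈ M.F
    · exact ⟨j, le_refl j, hτj⟩
    obtain ⟨u'0, hu'δ, hu'V, hdisj⟩ := BA.pend_step M hq hsim hPCj hτj (hrun j)
    have hstep : BA.play σ t α ρ (j+1) =
        σ (BA.play σ t α ρ j) (ρ j) (α j) (ρ (j+1)) := rfl
    by_cases h1 : ∃ u', u' ∈ (M.addTr r a p).δ (BA.play σ t α ρ j) (α j) ∧
        BA.Vrel M (ρ (j+1)) u' ∧ u' ∈ M.F
    · refine ⟨j+1, by omega, ?_⟩
      rw [hstep]
      exact BA.strat_F M hM r a p h1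
    · have hu'nF : u'0 ∉ M.F := fun hf => h1 ⟨u'0, Or.inl hu'δ, hu'V, hf⟩
      obtain ⟨hPC', hrklt⟩ := hdisj.resolve_left hu'nF
      have hex : ∃ u', u' ∈ (M.addTr r a p).δ (BA.play σ t α ρ j) (α j) ∧
          BA.Vrel M (ρ (j+1)) u' ∧ BA.PCrel M (ρ (j+1)) u' :=
        ⟨u'0, Or.inl hu'δ, hu'V, hPC'⟩
      obtain ⟨hPCs, hmin⟩ := BA.strat_P M hM r a p (x := ρ j) h1 hex
      rw [← hσdef] at hPCs hmin
      have hlt2 : BA.rk M (ρ (j+1)) (BA.play σ t α ρ (j+1)) < m := by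
        rw [hstep]
        calc BA.rk M (ρ (j+1)) (σ (BA.play σ t α ρ j) (ρ j) (α j) (ρ (j+1)))
            ≤ BA.rk M (ρ (j+1)) u'0 := hmin u'0 ⟨Or.inl hu'δ, hu'V, hPC'⟩
          _ < BA.rk M (ρ j) (BA.play σ t α ρ j) := hrklt
          _ = m := hrkj
      obtain ⟨k, hk, hkF⟩ := IH _ hlt2 (j+1) (by rw [hstep]; exact hPCs) rfl
      exact ⟨k, by omega, hkF⟩
  obtain ⟨k, hk, hkF⟩ := haux _ i hPC rfl
  exact ⟨k, hk, hkF⟩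


/-- adding the transition `r →a p` (with `r →a q ∈ δ` and
`p ⊑_de q`) only enlarges the delayed simulation: `⊑_de(A) ⊆ ⊑_de(A')`. -/
theorem stmt9 {A : Type u} {Q : Type v} (M : BA A Q) (hM : M.Complete)
    (p q r : Q) (a : A) (hq : q ∈ M.δ r a) (hsim : M.DeSim p q) :
    ∀ s t : Q, M.DeSim s t → (M.addTr r a p).DeSim s t :=
  stmt9' M hM p q r a hq hsim
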